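/- Let A be an anti-commutative algebra over a field F. The set K of all CB-elements of A is a subalgebra of A: 0 ∈ K, and if z₁, z₂ ∈ K and c ∈ F then z₁ + z₂ ∈ K, c·z₁ ∈ K, and z₁·z₂ ∈ K. -/
import Mathlib


/-- The set of all CB-elements of an anti-commutative algebra is a
subalgebra: it contains `0` and is closed under addition, scalar
multiplication and multiplication. -/
theorem stmt_7 (F : Type*) [Field F] (A : Type*) [AddCommGroup A] [Module F A]
    (mul : A →ₗ[F] A →ₗ[F] A)
    (hac : ∀ x : A, mul x x = 0) :
    (∀ x y : A, mul x y = 0 → mul (mul x (0 : A)) y = 0) ∧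
      (∀ z₁ z₂ : A, ∀ c : F,
        (∀ x y : A, mul x y = 0 → mul (mul x z₁) y = 0) →
        (∀ x y : A, mul x y = 0 → mul (mul x z₂) y = 0) →
        (∀ x y : A, mul x y = 0 → mul (mul x (z₁ + z₂)) y = 0) ∧
        (∀ x y : A, mul x y = 0 → mul (mul x (c • z₁)) y = 0) ∧
        (∀ x y : A, mul x y = 0 → mul (mul x (mul z₁ z₂)) y = 0)) := by
  constructor
  · intro x y _
    simp
  · intro z₁ z₂ c h₁ h₂
    refine ⟨?_, ?_, ?_⟩
    · intro x y hxy
      have := h₁ x y hxy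
      have := h₂ x y hxy
      simp [map_add, *]
    · intro x y hxy
      have := h₁ x y hxy
      simp [map_smul, *]
    · intro x y hxy
      -- anti-commutativity of mul
      have anti : ∀ a b : A, mul a b = - mul b a := by
        intro a b
        have h := hac (a + b)
        simp only [map_add, LinearMap.add_apply, hac] at h
        rw [zero_add, add_zero] at h
        exact eq_neg_of_add_eq_zero_right h
      -- polarized CB identity for z₂ : (a z₂) b = - (b z₂) a
      have star : ∀ a b : A, mul (mul a z₂) b = - mul (mul b z₂) a := by
        intro a b
        have h := h₂ (a + b) (a + b) (hac _)
        simp only [map_add, LinearMap.add_apply, h₂ a a (hac a), h₂ b b (hac b)] at h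
        rw [zero_add, add_zero] at h
        exact eq_neg_of_add_eq_zero_right h
      -- key rewriting : x (z₁ z₂) = (x z₂) z₁
      have key : mul x (mul z₁ z₂) = mul (mul x z₂) z₁ := by
        rw [anti x (mul z₁ z₂), star z₁ x, neg_neg]
      rw [key]
      exact h₁ (mul x z₂) y (h₂ x y hxy)
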